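/- Let A be a bialgebra over a field k and suppose A decomposes as a direct sum of k-subspaces A = k·1_A ⊕ C, where C is a subcoalgebra of A, i.e., Δ(C) is contained in the image of C ⊗ C in A ⊗ A. Let ∫ : A → k be the k-linear functional determined by ∫(1_A) = 1 and ∫(c) = 0 for all c ∈ C. Then ∫ is a normalized two-sided integral (a Haar measure) on A: for every x ∈ A one has (id_A ⊗ ∫)(Δx) = ∫(x)·1_A and (∫ ⊗ id_A)(Δx) = ∫(x)·1_A, and ∫(1_A) = 1. -/
import Mathlib


open TensorProduct

/-- Let `A` be a bialgebra over `k` decomposing as `A = k·1_A ⊕ C` with `C` a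
subcoalgebra (`Δ(C) ⊆ im(C ⊗ C → A ⊗ A)`), and let `∫ : A → k` be the linear functional with
`∫(1_A) = 1` and `∫|_C = 0`. Then `∫` is a normalized two-sided integral (Haar measure) on
`A`: `(id ⊗ ∫)(Δ x) = ∫(x) · 1_A` and `(∫ ⊗ id)(Δ x) = ∫(x) · 1_A` for all `x ∈ A`, and
`∫(1_A) = 1`. -/
theorem haar_measure_of_subcoalgebra_complement {k A : Type*} [Field k] [Semiring A]
    [Bialgebra k A] (C : Submodule k A)
    (hcompl : IsCompl (k ∙ (1 : A)) C)
    (hC : ∀ c ∈ C, Coalgebra.comul (R := k) c ∈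
      LinearMap.range (TensorProduct.map C.subtype C.subtype))
    (I : A →ₗ[k] k) (hI1 : I 1 = 1) (hIC : ∀ c ∈ C, I c = 0) :
    (∀ x : A, TensorProduct.rid k A ((LinearMap.lTensor A I) (Coalgebra.comul (R := k) x))
      = I x • (1 : A)) ∧
    (∀ x : A, TensorProduct.lid k A ((LinearMap.rTensor A I) (Coalgebra.comul (R := k) x))
      = I x • (1 : A)) ∧
    I 1 = 1 := by
  -- key: I kills both factors in the image of C ⊗ C
  have hkillL : ∀ y ∈ LinearMap.range (TensorProduct.map C.subtype C.subtype),
      TensorProduct.rid k A ((LinearMap.lTensor A I) y) = 0 := by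
    rintro _ ⟨z, rfl⟩
    induction z using TensorProduct.induction_on with
    | zero => simp
    | tmul a b =>
        simp [hIC b b.2]
    | add u v hu hv =>
        simp only [map_add, hu, hv, add_zero]
  have hkillR : ∀ y ∈ LinearMap.range (TensorProduct.map C.subtype C.subtype),
      TensorProduct.lid k A ((LinearMap.rTensor A I) y) = 0 := by
    rintro _ ⟨z, rfl⟩
    induction z using TensorProduct.induction_on with
    | zero => simp
    | tmul a b =>
        simp [hIC a a.2]
    | add u v hu hv =>
        simp only [map_add, hu, hv, add_zero]
  have hdecomp : ∀ x : A, ∃ a : k, ∃ c ∈ C, x = a • (1 : A) + c := by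
    intro x
    have hx : x ∈ (k ∙ (1 : A)) ⊔ C := by
      rw [hcompl.sup_eq_top]; trivial
    obtain ⟨y, hy, c, hc, rfl⟩ := Submodule.mem_sup.mp hx
    obtain ⟨a, rfl⟩ := Submodule.mem_span_singleton.mp hy
    exact ⟨a, c, hc, rfl⟩
  have hcomul1 : Coalgebra.comul (R := k) (1 : A) = (1 : A) ⊗ₜ[k] (1 : A) := by
    rw [Bialgebra.comul_one]; rfl
  refine ⟨?_, ?_, hI1⟩
  · intro x
    obtain ⟨a, c, hc, rfl⟩ := hdecomp x
    have hIx : I (a • (1 : A) + c) = a := by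
      simp [hI1, hIC c hc]
    rw [hIx, map_add, map_smul, hcomul1, map_add, map_add]
    rw [hkillL _ (hC c hc), add_zero]
    simp [hI1]
  · intro x
    obtain ⟨a, c, hc, rfl⟩ := hdecomp x
    have hIx : I (a • (1 : A) + c) = a := by
      simp [hI1, hIC c hc]
    rw [hIx, map_add, map_smul, hcomul1, map_add, map_add]
    rw [hkillR _ (hC c hc), add_zero]
    simp [hI1]
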